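/- Let G be a locally compact second countable group acting continuously on a locally compact Hausdorff second countable space X, preserving the measure class of a Radon measure ν, and suppose there is C ≥ 1 such that for every g ∈ G the Radon–Nikodym derivative satisfies C⁻¹ ≤ d(g_*ν)/dν ≤ C ν-almost everywhere. Then there exists a G-invariant measure m in the measure class of ν with C⁻¹ ≤ dm/dν ≤ C ν-almost everywhere (in particular m and ν are mutually absolutely continuous with density bounded and bounded away from 0). -/

import Mathlib

open MeasureTheory
open MeasureTheory.Measure Filter Topology Set

open scoped ENNReal NNReal Pointwise

lemma smul_map_withDensity {G X : Type*} [Group G] [TopologicalSpace X]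
    [MeasurableSpace X] [BorelSpace X] [MulAction G X] [ContinuousConstSMul G X]
    (ν : Measure X) (g : G) {f : X → ℝ≥0∞} (hf : Measurable f) :
    Measure.map (fun x : X => g • x) (ν.withDensity f)
      = (Measure.map (fun x : X => g • x) ν).withDensity (fun x => f (g⁻¹ • x)) := by
  have hg : Measurable (fun x : X => g • x) := (continuous_const_smul g).measurable
  have hg' : Measurable (fun x : X => g⁻¹ • x) := (continuous_const_smul g⁻¹).measurable
  ext s hs
  rw [Measure.map_apply hg hs, withDensity_apply _ (hg hs), withDensity_apply _ hs,
    Measure.restrict_map hg hs, lintegral_map (f := fun x => f (g⁻¹ • x)) (hf.comp hg') hg]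
  simp [inv_smul_smul]



/-- If a locally compact second countable group acts continuously on a locally compact
Hausdorff second countable space preserving the measure class of a Radon measure `ν`
with Radon–Nikodym derivatives uniformly bounded between `C⁻¹` and `C`, then there is a
`G`-invariant measure `m` in the class of `ν` with `C⁻¹ ≤ dm/dν ≤ C` a.e. -/
theorem exists_invariant_measure_of_bounded_rnDeriv
    {G X : Type*} [Group G] [TopologicalSpace G] [IsTopologicalGroup G]
    [LocallyCompactSpace G] [SecondCountableTopology G]
    [TopologicalSpace X] [LocallyCompactSpace X] [T2Space X] [SecondCountableTopology X]
    [MeasurableSpace X] [BorelSpace X]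
    [MulAction G X] [ContinuousSMul G X]
    (ν : Measure X) [ν.Regular]
    (C : ℝ) (hC : 1 ≤ C)
    (hclass : ∀ g : G, Measure.map (fun x : X => g • x) ν ≪ ν ∧
      ν ≪ Measure.map (fun x : X => g • x) ν)
    (hrn : ∀ g : G, ∀ᵐ x ∂ν,
      ENNReal.ofReal C⁻¹ ≤ (Measure.map (fun x : X => g • x) ν).rnDeriv ν x ∧
      (Measure.map (fun x : X => g • x) ν).rnDeriv ν x ≤ ENNReal.ofReal C) :
    ∃ m : Measure X, (∀ g : G, Measure.map (fun x : X => g • x) m = m) ∧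
      m ≪ ν ∧ ν ≪ m ∧
      ∀ᵐ x ∂ν, ENNReal.ofReal C⁻¹ ≤ m.rnDeriv ν x ∧ m.rnDeriv ν x ≤ ENNReal.ofReal C := by
  classical
  haveI : Nonempty G := ⟨1⟩
  have hsm : ∀ g : G, Measurable (fun x : X => g • x) :=
    fun g => (continuous_const_smul g).measurable
  set f : G → X → ℝ≥0∞ := fun g => (Measure.map (fun x : X => g • x) ν).rnDeriv ν with hfdef
  have hfm : ∀ g, Measurable (f g) := fun g => Measure.measurable_rnDeriv _ _
  have hsig : ∀ g : G, SigmaFinite (Measure.map (fun x : X => g • x) ν) := by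
    intro g
    exact ((Homeomorph.smul g : X ≃ₜ X).toMeasurableEquiv).sigmaFinite_map
  have hwd : ∀ g : G, Measure.map (fun x : X => g • x) ν = ν.withDensity (f g) := by
    intro g
    haveI := hsig g
    exact (Measure.withDensity_rnDeriv_eq _ _ (hclass g).1).symm
  have hub : ∀ g : G, ∀ᵐ x ∂ν, f g x ≤ ENNReal.ofReal C :=
    fun g => (hrn g).mono fun x hx => hx.2
  -- the cocycle identity
  have hcoc : ∀ a b : G, f (a * b) =ᵐ[ν] fun x => f a x * f b (a⁻¹ • x) := by
    intro a b
    have h1 : Measure.map (fun x : X => (a * b) • x) ν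
        = ν.withDensity (fun x => f a x * f b (a⁻¹ • x)) := by
      have hcomp : (fun x : X => (a * b) • x) = (fun x : X => a • x) ∘ (fun x : X => b • x) := by
        funext x; simp [mul_smul]
      rw [hcomp, ← Measure.map_map (hsm a) (hsm b), hwd b, smul_map_withDensity ν a (hfm b),
        hwd a, ← withDensity_mul (f := f a) (g := fun x => f b (a⁻¹ • x)) ν (hfm a) ((hfm b).comp (hsm a⁻¹))]
      rfl
    calc f (a * b) = (ν.withDensity (fun x => f a x * f b (a⁻¹ • x))).rnDeriv ν := by
          rw [hfdef]; simp only; rw [h1]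
      _ =ᵐ[ν] fun x => f a x * f b (a⁻¹ • x) :=
          Measure.rnDeriv_withDensity ν ((hfm a).mul ((hfm b).comp (hsm a⁻¹)))
  -- the key continuity lemma
  have key : ∀ u : ℕ → G, DenseRange u → ∀ γ : G,
      f γ ≤ᵐ[ν] fun x => ⨆ i, f (u i) x := by
    intro u hu γ
    set F : X → ℝ≥0∞ := fun x => ⨆ i, f (u i) x with hFdef
    have hFm : Measurable F := Measurable.iSup fun i => hfm (u i)
    set m : Measure X := ν.withDensity F with hmdef
    have hFC : ∀ᵐ x ∂ν, F x ≤ ENNReal.ofReal C := by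
      have h := ae_all_iff.mpr fun i : ℕ => hub (u i)
      exact h.mono fun x hx => iSup_le hx
    have hmC : ∀ s : Set X, MeasurableSet s → m s ≤ ENNReal.ofReal C * ν s := by
      intro s hs
      rw [hmdef, withDensity_apply _ hs]
      calc ∫⁻ x in s, F x ∂ν ≤ ∫⁻ _x in s, ENNReal.ofReal C ∂ν :=
            lintegral_mono_ae (ae_restrict_of_ae hFC)
        _ = ENNReal.ofReal C * ν s := by rw [setLIntegral_const]
    have hmapm : ∀ i, Measure.map (fun x : X => u i • x) ν ≤ m := by
      intro i
      rw [hwd (u i), hmdef]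
      exact withDensity_mono (ae_of_all _ fun x => le_iSup (fun j => f (u j) x) i)
    have stepA : ∀ s : Set X, MeasurableSet s → ν s ≠ ∞ →
        (Measure.map (fun x : X => γ • x) ν) s ≤ m s := by
      intro s hs hνs
      refine ENNReal.le_of_forall_pos_le_add fun ε hε _hms => ?_
      set δ : ℝ≥0∞ := (ε : ℝ≥0∞) / ENNReal.ofReal C with hδdef
      have hC0 : (0:ℝ) < C := lt_of_lt_of_le one_pos hC
      have hδ0 : δ ≠ 0 := by
        rw [hδdef]
        exact ENNReal.div_ne_zero.mpr ⟨by exact_mod_cast hε.ne', ENNReal.ofReal_ne_top⟩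
      obtain ⟨U, hsU, hUopen, hUlt⟩ :=
        Set.exists_isOpen_lt_of_lt s (ν s + δ) (ENNReal.lt_add_right hνs hδ0)
      have hνdiff : ν (U \ s) ≤ δ := by
        rw [measure_diff hsU hs.nullMeasurableSet hνs]
        exact tsub_le_iff_left.mpr hUlt.le
      have hKU : ∀ K : Set X, IsCompact K → K ⊆ U →
          (Measure.map (fun x : X => γ • x) ν) K ≤ m U := by
        intro K hK hKsub
        obtain ⟨φ, hφK, hφUc, hφsupp, hφ01⟩ :=
          exists_continuous_one_zero_of_isCompact hK hUopen.isClosed_compl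
            (Set.disjoint_left.mpr fun x hxK hxUc => hxUc (hKsub hxK))
        set ψ : X → ℝ≥0∞ := fun x => ENNReal.ofReal (φ x) with hψdef
        have hψm : Measurable ψ := ENNReal.measurable_ofReal.comp φ.continuous.measurable
        have hψ1 : ∀ x, ψ x ≤ 1 := fun x => by
          rw [hψdef]
          simpa using ENNReal.ofReal_le_ofReal (hφ01 x).2
        have hψU : ∀ x, ψ x ≤ U.indicator (fun _ => (1:ℝ≥0∞)) x := by
          intro x
          by_cases hx : x ∈ U
          · simpa [hx] using hψ1 x
          · have : φ x = 0 := hφUc hx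
            simp [hψdef, this, hx]
        obtain ⟨v, hvmem, hvlim⟩ := mem_closure_iff_seq_limit.mp (hu γ)
        have hLc : IsCompact (insert γ (Set.range v)) := hvlim.isCompact_insert_range
        set K₀ : Set X := (insert γ (Set.range v))⁻¹ • tsupport φ with hK₀def
        have hK₀c : IsCompact K₀ := hLc.inv.smul_set hφsupp
        have hK₀fin : ν K₀ ≠ ∞ := hK₀c.measure_lt_top.ne
        have hdom : ∀ n, ∀ x, ψ (v n • x) ≤ K₀.indicator (fun _ => (1:ℝ≥0∞)) x := by
          intro n x
          by_cases hx : x ∈ K₀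
          · simpa [hx] using hψ1 _
          · have hz : φ (v n • x) = 0 := by
              apply image_eq_zero_of_notMem_tsupport
              intro hmem
              apply hx
              have h1 : (v n)⁻¹ ∈ (insert γ (Set.range v))⁻¹ :=
                Set.inv_mem_inv.mpr (Set.mem_insert_of_mem _ (Set.mem_range_self n))
              have := Set.smul_mem_smul h1 hmem
              rwa [inv_smul_smul] at this
            simp [hψdef, hz, hx]
        have hptwise : ∀ x, Tendsto (fun n => ψ (v n • x)) atTop (𝓝 (ψ (γ • x))) := by
          intro x
          have hcont : Continuous fun g : G => ψ (g • x) :=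
            ENNReal.continuous_ofReal.comp (φ.continuous.comp (continuous_id.smul continuous_const))
          exact (hcont.tendsto γ).comp hvlim
        have hbound_int : ∫⁻ x, K₀.indicator (fun _ => (1:ℝ≥0∞)) x ∂ν ≠ ∞ := by
          rw [lintegral_indicator hK₀c.measurableSet _, setLIntegral_one]
          exact hK₀fin
        have htend : Tendsto (fun n => ∫⁻ x, ψ (v n • x) ∂ν) atTop (𝓝 (∫⁻ x, ψ (γ • x) ∂ν)) :=
          tendsto_lintegral_of_dominated_convergence _
            (fun n => hψm.comp (hsm (v n))) (fun n => ae_of_all _ (hdom n))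
            hbound_int (ae_of_all _ hptwise)
        have hterm : ∀ n, ∫⁻ x, ψ (v n • x) ∂ν ≤ m U := by
          intro n
          obtain ⟨i, hi⟩ := hvmem n
          have h1 : ∫⁻ x, ψ (v n • x) ∂ν = ∫⁻ y, ψ y ∂(Measure.map (fun x : X => v n • x) ν) :=
            (lintegral_map hψm (hsm (v n))).symm
          rw [h1]
          calc ∫⁻ y, ψ y ∂(Measure.map (fun x : X => v n • x) ν)
              ≤ ∫⁻ y, ψ y ∂m := lintegral_mono' (hi ▸ hmapm i) le_rfl
            _ ≤ ∫⁻ y, U.indicator (fun _ => (1:ℝ≥0∞)) y ∂m := lintegral_mono hψU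
            _ = m U := by rw [lintegral_indicator hUopen.measurableSet _, setLIntegral_one]
        have hlim_le : ∫⁻ x, ψ (γ • x) ∂ν ≤ m U := le_of_tendsto' htend hterm
        calc (Measure.map (fun x : X => γ • x) ν) K
            = ∫⁻ x, K.indicator (fun _ => (1:ℝ≥0∞)) x
                ∂(Measure.map (fun x : X => γ • x) ν) := by
              rw [lintegral_indicator hK.measurableSet _, setLIntegral_one]
          _ ≤ ∫⁻ x, ψ x ∂(Measure.map (fun x : X => γ • x) ν) := by
              refine lintegral_mono fun x => ?_
              by_cases hx : x ∈ K
              · have : φ x = 1 := hφK hx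
                simp [hx, hψdef, this]
              · simp [hx]
          _ = ∫⁻ x, ψ (γ • x) ∂ν := lintegral_map hψm (hsm γ)
          _ ≤ m U := hlim_le
      haveI : (Measure.map (fun x : X => γ • x) ν).Regular :=
        Measure.Regular.map (Homeomorph.smul γ : X ≃ₜ X)
      have hUm : (Measure.map (fun x : X => γ • x) ν) U ≤ m U := by
        rw [hUopen.measure_eq_iSup_isCompact]
        exact iSup_le fun K => iSup_le fun hKsub => iSup_le fun hKc => hKU K hKc hKsub
      calc (Measure.map (fun x : X => γ • x) ν) s
          ≤ (Measure.map (fun x : X => γ • x) ν) U := measure_mono hsU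
        _ ≤ m U := hUm
        _ ≤ m s + m (U \ s) := by
            refine le_trans (measure_mono fun x hx => ?_) (measure_union_le s (U \ s))
            by_cases h : x ∈ s
            · exact Or.inl h
            · exact Or.inr ⟨hx, h⟩
        _ ≤ m s + ENNReal.ofReal C * δ := by
            gcongr
            exact le_trans (hmC _ (hUopen.measurableSet.diff hs))
              (by gcongr)
        _ ≤ m s + ε := by
            gcongr
            rw [hδdef]
            exact ENNReal.mul_div_le
    refine ae_le_of_forall_setLIntegral_le_of_sigmaFinite (hfm γ) fun s hs hνs => ?_
    have h1 : ∫⁻ x in s, f γ x ∂ν = (Measure.map (fun x : X => γ • x) ν) s := by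
      haveI := hsig γ
      exact Measure.setLIntegral_rnDeriv' (hclass γ).1 hs
    have h2 : ∫⁻ x in s, F x ∂ν = m s := (withDensity_apply _ hs).symm
    rw [h1, h2]
    exact stepA s hs hνs.ne
  -- the construction
  set u : ℕ → G := TopologicalSpace.denseSeq G with hudef
  have hudense : DenseRange u := TopologicalSpace.denseRange_denseSeq G
  set F : X → ℝ≥0∞ := fun x => ⨆ i, f (u i) x with hFdef
  have hFm : Measurable F := Measurable.iSup fun i => hfm (u i)
  have hFC : ∀ᵐ x ∂ν, F x ≤ ENNReal.ofReal C := by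
    have h := ae_all_iff.mpr fun i : ℕ => hub (u i)
    exact h.mono fun x hx => iSup_le hx
  have hone : f (1 : G) =ᵐ[ν] fun _ => 1 := by
    have hmap : Measure.map (fun x : X => (1:G) • x) ν = ν := by
      simp only [one_smul]
      exact Measure.map_id
    rw [hfdef]
    simp only
    rw [hmap]
    exact Measure.rnDeriv_self ν
  have hlow : ∀ᵐ x ∂ν, ENNReal.ofReal C⁻¹ ≤ F x := by
    have h1 := key u hudense 1
    filter_upwards [h1, hone] with x hx1 hx2
    calc ENNReal.ofReal C⁻¹ ≤ 1 := ENNReal.ofReal_le_one.mpr (inv_le_one_of_one_le₀ hC)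
      _ = f 1 x := hx2.symm
      _ ≤ F x := hx1
  have hC0 : (0:ℝ) < C := lt_of_lt_of_le one_pos hC
  refine ⟨ν.withDensity F, ?_, withDensity_absolutelyContinuous _ _, ?_, ?_⟩
  · -- invariance
    intro g
    rw [smul_map_withDensity ν g hFm, hwd g,
      ← withDensity_mul (f := f g) (g := fun x => F (g⁻¹ • x)) ν (hfm g) (hFm.comp (hsm g⁻¹))]
    refine withDensity_congr_ae ?_
    have hsup : ∀ᵐ x ∂ν, ∀ i, f g x * f (u i) (g⁻¹ • x) = f (g * u i) x :=
      ae_all_iff.mpr fun i => (hcoc g (u i)).mono fun x hx => hx.symm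
    have hle1 : ∀ᵐ x ∂ν, (⨆ i, f (g * u i) x) ≤ F x := by
      have h := ae_all_iff.mpr fun i : ℕ => key u hudense (g * u i)
      exact h.mono fun x hx => iSup_le hx
    have hle2 : ∀ᵐ x ∂ν, F x ≤ ⨆ i, f (g * u i) x := by
      have hu' : DenseRange (fun i => g * u i) := by
        have hcomp : (fun i => g * u i) = (fun a => g * a) ∘ u := rfl
        rw [hcomp]
        exact DenseRange.comp
          (Function.Surjective.denseRange fun a => ⟨g⁻¹ * a, by group⟩)
          hudense (continuous_mul_left g)
      have h := ae_all_iff.mpr fun i : ℕ => key (fun j => g * u j) hu' (u i)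
      exact h.mono fun x hx => iSup_le hx
    filter_upwards [hsup, hle1, hle2] with x h1 h2 h3
    have hmain : f g x * F (g⁻¹ • x) = ⨆ i, f (g * u i) x := by
      rw [hFdef]
      simp only
      rw [ENNReal.mul_iSup]
      exact iSup_congr h1
    show f g x * F (g⁻¹ • x) = F x
    rw [hmain]
    exact le_antisymm h2 h3
  · -- ν ≪ m
    refine Measure.AbsolutelyContinuous.mk fun A hA hmA => ?_
    rw [withDensity_apply _ hA] at hmA
    have h0 : ∀ᵐ x ∂ν.restrict A, F x = 0 := (lintegral_eq_zero_iff hFm).mp hmA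
    have h1 : ∀ᵐ x ∂ν.restrict A, ENNReal.ofReal C⁻¹ ≤ F x := ae_restrict_of_ae hlow
    have h2 : ∀ᵐ _x ∂ν.restrict A, False := by
      filter_upwards [h0, h1] with x hx0 hx1
      rw [hx0, le_zero_iff] at hx1
      exact absurd hx1 (ENNReal.ofReal_pos.mpr (inv_pos.mpr hC0)).ne'
    have h3 : (ν.restrict A) Set.univ = 0 := by
      simpa using ae_iff.mp h2
    rwa [Measure.restrict_apply_univ] at h3
  · -- bounds
    have hrd : (ν.withDensity F).rnDeriv ν =ᵐ[ν] F := Measure.rnDeriv_withDensity ν hFm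
    filter_upwards [hrd, hlow, hFC] with x h1 h2 h3
    rw [h1]
    exact ⟨h2, h3⟩
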